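/- Define f₀ on [-1,0] by f₀(y) = y(y+1)(a + by + cy² + y³), where (a,b,c,G) solves the system: (1-G⁴)a + G⁴b - G⁴c = -G⁴; (1+G³)a + (1-2G³)b + 3G³c = 4G³; (1+G²)b + (1-3G²)c = -6G²; (1+G)c = 4G-1. Then f₀⁽⁵⁾(y) = 5! on (-1,0), f₀(-1) = f₀(0) = 0, and the extension of f₀ to (0, G] by f₀(y) = -G⁵ f₀(y/G - 1) satisfies f₀⁽⁵⁾ = -5! there and matches f₀ at y = 0 up to fourth derivatives: the jumps [f₀'](0), [f₀''](0), [f₀'''](0), [f₀⁽⁴⁾](0) all vanish. -/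

import Mathlib

open Set

private lemma hasDeriv_q (c0 c1 c2 c3 c4 c5 x : ℝ) :
    HasDerivAt (fun y : ℝ => c0 + c1 * y + c2 * y ^ 2 + c3 * y ^ 3 + c4 * y ^ 4 + c5 * y ^ 5)
      (c1 + 2 * c2 * x + 3 * c3 * x ^ 2 + 4 * c4 * x ^ 3 + 5 * c5 * x ^ 4) x := by
  have h := (((((hasDerivAt_const x c0).add ((hasDerivAt_id x).const_mul c1)).add
      ((hasDerivAt_pow 2 x).const_mul c2)).add ((hasDerivAt_pow 3 x).const_mul c3)).add
      ((hasDerivAt_pow 4 x).const_mul c4)).add ((hasDerivAt_pow 5 x).const_mul c5)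
  convert h using 1 <;> try rfl
  norm_num; ring

private lemma deriv_q (c0 c1 c2 c3 c4 c5 : ℝ) :
    deriv (fun y : ℝ => c0 + c1 * y + c2 * y ^ 2 + c3 * y ^ 3 + c4 * y ^ 4 + c5 * y ^ 5)
      = fun x : ℝ => c1 + 2 * c2 * x + 3 * c3 * x ^ 2 + 4 * c4 * x ^ 3 + 5 * c5 * x ^ 4 := by
  funext x
  exact (hasDeriv_q c0 c1 c2 c3 c4 c5 x).deriv

private lemma iterchain (c0 c1 c2 c3 c4 c5 : ℝ) (f : ℝ → ℝ)
    (hf : f = fun y : ℝ => c0 + c1 * y + c2 * y ^ 2 + c3 * y ^ 3 + c4 * y ^ 4 + c5 * y ^ 5) :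
    (∀ y : ℝ, iteratedDeriv 5 f y = 120 * c5) ∧
    iteratedDeriv 1 f 0 = c1 ∧ iteratedDeriv 2 f 0 = 2 * c2 ∧
    iteratedDeriv 3 f 0 = 6 * c3 ∧ iteratedDeriv 4 f 0 = 24 * c4 := by
  have e1 : deriv f = fun y : ℝ => c1 + (2 * c2) * y + (3 * c3) * y ^ 2 + (4 * c4) * y ^ 3
      + (5 * c5) * y ^ 4 + 0 * y ^ 5 := by
    rw [hf, deriv_q]; funext y; ring
  have e2 : deriv (deriv f) = fun y : ℝ => (2 * c2) + (6 * c3) * y + (12 * c4) * y ^ 2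
      + (20 * c5) * y ^ 3 + 0 * y ^ 4 + 0 * y ^ 5 := by
    rw [e1, deriv_q]; funext y; ring
  have e3 : deriv (deriv (deriv f)) = fun y : ℝ => (6 * c3) + (24 * c4) * y
      + (60 * c5) * y ^ 2 + 0 * y ^ 3 + 0 * y ^ 4 + 0 * y ^ 5 := by
    rw [e2, deriv_q]; funext y; ring
  have e4 : deriv (deriv (deriv (deriv f))) = fun y : ℝ => (24 * c4) + (120 * c5) * y
      + 0 * y ^ 2 + 0 * y ^ 3 + 0 * y ^ 4 + 0 * y ^ 5 := by
    rw [e3, deriv_q]; funext y; ring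
  have e5 : deriv (deriv (deriv (deriv (deriv f)))) = fun y : ℝ => (120 * c5) + 0 * y
      + 0 * y ^ 2 + 0 * y ^ 3 + 0 * y ^ 4 + 0 * y ^ 5 := by
    rw [e4, deriv_q]; funext y; ring
  refine ⟨fun y => ?_, ?_, ?_, ?_, ?_⟩
  · simp only [iteratedDeriv_succ, iteratedDeriv_zero, e5]; ring
  · simp only [iteratedDeriv_succ, iteratedDeriv_zero, e1]; norm_num
  · simp only [iteratedDeriv_succ, iteratedDeriv_zero, e2]; norm_num
  · simp only [iteratedDeriv_succ, iteratedDeriv_zero, e3]; norm_num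
  · simp only [iteratedDeriv_succ, iteratedDeriv_zero, e4]; norm_num

theorem stmt14 (a b c G : ℝ) (hG : G ∈ Ioo (0 : ℝ) 1)
    (h1 : (1 - G ^ 4) * a + G ^ 4 * b - G ^ 4 * c = -G ^ 4)
    (h2 : (1 + G ^ 3) * a + (1 - 2 * G ^ 3) * b + 3 * G ^ 3 * c = 4 * G ^ 3)
    (h3 : (1 + G ^ 2) * b + (1 - 3 * G ^ 2) * c = -6 * G ^ 2)
    (h4 : (1 + G) * c = 4 * G - 1)
    (f₀ g : ℝ → ℝ)
    (hf₀ : ∀ y : ℝ, f₀ y = y * (y + 1) * (a + b * y + c * y ^ 2 + y ^ 3))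
    (hg : ∀ y : ℝ, g y = -G ^ 5 * f₀ (y / G - 1)) :
    (∀ y : ℝ, iteratedDeriv 5 f₀ y = 120) ∧
    f₀ (-1) = 0 ∧ f₀ 0 = 0 ∧
    (∀ y : ℝ, iteratedDeriv 5 g y = -120) ∧
    (∀ j : Fin 5, 1 ≤ (j : ℕ) → iteratedDeriv j g 0 = iteratedDeriv j f₀ 0) := by
  have hG0 : G ≠ 0 := ne_of_gt hG.1
  have hfq : f₀ = fun y : ℝ => 0 + a * y + (a + b) * y ^ 2 + (b + c) * y ^ 3
      + (c + 1) * y ^ 4 + 1 * y ^ 5 := by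
    funext y; rw [hf₀]; ring
  have hgq : g = fun y : ℝ => 0 + (-G ^ 4 * (-a + b - c + 1)) * y
      + (-G ^ 3 * (a - 2 * b + 3 * c - 4)) * y ^ 2
      + (-G ^ 2 * (b - 3 * c + 6)) * y ^ 3
      + (-G * (c - 4)) * y ^ 4 + (-1) * y ^ 5 := by
    funext y
    rw [hg, hf₀]
    field_simp
    ring
  obtain ⟨F5, F1, F2, F3, F4⟩ := iterchain _ _ _ _ _ _ f₀ hfq
  obtain ⟨G5, G1, G2, G3, G4⟩ := iterchain _ _ _ _ _ _ g hgq
  refine ⟨fun y => by rw [F5 y]; norm_num, by rw [hf₀]; ring, by rw [hf₀]; ring,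
    fun y => by rw [G5 y]; norm_num, ?_⟩
  intro j hj
  fin_cases j
  · norm_num at hj
  · rw [G1, F1]; linear_combination (-1 : ℝ) * h1
  · rw [G2, F2]; linear_combination (-2 : ℝ) * h2
  · rw [G3, F3]; linear_combination (-6 : ℝ) * h3
  · rw [G4, F4]; linear_combination (-24 : ℝ) * h4
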